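/- Bound on individual Taylor terms of the CSI ratio: if |c_l| = 1 for every l ∈ Fin L, then for every k ≥ 1, every tuple (l₁,…,l_k) ∈ (Fin L)^k, every z ∈ ℂ^L with D(z) ≠ 0, every R ≥ 0, and every family of complex increments w₁,…,w_k with |w_i| ≤ R for all i, one has |(1/k!) · ∂^k f / ∂z_{l₁}⋯∂z_{l_k}(z) · ∏_{i=1}^{k} w_i| ≤ ((|N(z)| + |D(z)|)/|D(z)|) · (R / |D(z)|)^k. -/

import Mathlib

open scoped BigOperators

/-- Numerator `N(z) = A + Σ_l z_l` of the CSI ratio. -/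
noncomputable def Nfun (L : ℕ) (A : ℂ) (z : Fin L → ℂ) : ℂ := A + ∑ l, z l

/-- Denominator `D(z) = B + Σ_l c_l z_l` of the CSI ratio. -/
noncomputable def Dfun (L : ℕ) (B : ℂ) (c : Fin L → ℂ) (z : Fin L → ℂ) : ℂ :=
  B + ∑ l, c l * z l

/-- The CSI ratio `f(z) = N(z)/D(z)`. -/
noncomputable def ffun (L : ℕ) (A B : ℂ) (c : Fin L → ℂ) (z : Fin L → ℂ) : ℂ :=
  Nfun L A z / Dfun L B c z

/-! ### Auxiliary combinatorial coefficient bounds -/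

def AFc : ℕ → ℕ → ℕ
  | _, 0 => 1
  | m, t+1 => (m+1) * AFc (m+1) t

def BBc : ℕ → ℕ → ℕ
  | _, 0 => 1
  | m, t+1 => m * BBc (m+1) t

def BAc : ℕ → ℕ → ℕ
  | _, 0 => 0
  | m, t+1 => BBc (m+1) t + (m+1) * BAc (m+1) t

lemma AFc_fact : ∀ (t m : ℕ), m.factorial * AFc m t = (m + t).factorial := by
  intro t
  induction t with
  | zero => intro m; simp [AFc]
  | succ t ih =>
    intro m
    have := ih (m+1)
    simp only [AFc]
    calc m.factorial * ((m+1) * AFc (m+1) t) = (m+1).factorial * AFc (m+1) t := by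
          rw [Nat.factorial_succ]; ring
      _ = (m + 1 + t).factorial := this
      _ = (m + (t+1)).factorial := by ring_nf

lemma BBc_mul : ∀ (t m : ℕ), BBc m t * (m + t) = m * AFc m t := by
  intro t
  induction t with
  | zero => intro m; simp [BBc, AFc]
  | succ t ih =>
    intro m
    simp only [BBc, AFc]
    calc m * BBc (m+1) t * (m + (t+1)) = m * (BBc (m+1) t * (m + 1 + t)) := by ring
      _ = m * ((m+1) * AFc (m+1) t) := by rw [ih (m+1)]
      _ = m * ((m + 1) * AFc (m + 1) t) := by ring

lemma BAc_mul : ∀ (t m : ℕ), BAc m t * (m + t) = t * AFc m t := by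
  intro t
  induction t with
  | zero => intro m; simp [BAc]
  | succ t ih =>
    intro m
    simp only [BAc, AFc]
    have h1 : BBc (m+1) t * (m + 1 + t) = (m+1) * AFc (m+1) t := BBc_mul t (m+1)
    have h2 : BAc (m+1) t * (m + 1 + t) = t * AFc (m+1) t := ih (m+1)
    calc (BBc (m+1) t + (m+1) * BAc (m+1) t) * (m + (t+1))
        = BBc (m+1) t * (m + 1 + t) + (m+1) * (BAc (m+1) t * (m + 1 + t)) := by ring
      _ = (m+1) * AFc (m+1) t + (m+1) * (t * AFc (m+1) t) := by rw [h1, h2]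
      _ = (t+1) * ((m + 1) * AFc (m + 1) t) := by ring

lemma AFc_zero (k : ℕ) : AFc 0 k = k.factorial := by
  have := AFc_fact k 0
  simpa using this

lemma BAc_zero (k : ℕ) (hk : 1 ≤ k) : BAc 0 k = k.factorial := by
  have h := BAc_mul k 0
  simp only [Nat.zero_add, AFc_zero] at h
  have h2 : BAc 0 k * k = k.factorial * k := by rw [h]; ring
  exact Nat.eq_of_mul_eq_mul_right (by omega) h2

/-! ### Derivatives of the building blocks -/

section

variable (L : ℕ) (A B : ℂ) (c : Fin L → ℂ)

noncomputable def SN : (Fin L → ℂ) →L[ℂ] ℂ := ∑ l, ContinuousLinearMap.proj l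

noncomputable def SD : (Fin L → ℂ) →L[ℂ] ℂ := ∑ l, c l • ContinuousLinearMap.proj l

lemma SN_apply (j : Fin L) : SN L (Pi.single j 1) = 1 := by
  simp only [SN, ContinuousLinearMap.sum_apply, ContinuousLinearMap.proj_apply]
  rw [Finset.sum_eq_single j]
  · simp
  · intro b _ hb; simp [Pi.single_apply, hb]
  · intro h; exact absurd (Finset.mem_univ j) h

lemma SD_apply (j : Fin L) : SD L c (Pi.single j 1) = c j := by
  simp only [SD, ContinuousLinearMap.sum_apply, ContinuousLinearMap.smul_apply,
    ContinuousLinearMap.proj_apply, smul_eq_mul]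
  rw [Finset.sum_eq_single j]
  · simp
  · intro b _ hb; simp [Pi.single_apply, hb]
  · intro h; exact absurd (Finset.mem_univ j) h

lemma hasFDerivAt_N (x : Fin L → ℂ) : HasFDerivAt (Nfun L A) (SN L) x := by
  have : HasFDerivAt (fun z : Fin L → ℂ => A + ∑ l, z l) (SN L) x := by
    exact (HasFDerivAt.fun_sum fun l _ =>
      (ContinuousLinearMap.proj (R := ℂ) l).hasFDerivAt (x := x)).const_add A
  exact this

lemma hasFDerivAt_D (x : Fin L → ℂ) : HasFDerivAt (Dfun L B c) (SD L c) x := by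
  have : HasFDerivAt (fun z : Fin L → ℂ => B + ∑ l, c l * z l) (SD L c) x := by
    exact (HasFDerivAt.fun_sum fun l _ =>
      ((ContinuousLinearMap.proj (R := ℂ) l).hasFDerivAt (x := x)).const_mul (c l)).const_add B
  exact this

lemma contDiff_N : ContDiff ℂ (⊤ : ℕ∞) (Nfun L A) := by
  unfold Nfun
  exact contDiff_const.add (ContDiff.sum fun l _ => (ContinuousLinearMap.proj (R := ℂ) (φ := fun _ : Fin L => ℂ) l).contDiff)

lemma contDiff_D : ContDiff ℂ (⊤ : ℕ∞) (Dfun L B c) := by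
  unfold Dfun
  exact contDiff_const.add (ContDiff.sum fun l _ =>
    contDiff_const.mul (ContinuousLinearMap.proj (R := ℂ) (φ := fun _ : Fin L => ℂ) l).contDiff)

/-- The basic rational functions in our closed family. -/
noncomputable def Gfun (a b : ℂ) (m : ℕ) (x : Fin L → ℂ) : ℂ :=
  (a * Nfun L A x + b * Dfun L B c x) / Dfun L B c x ^ (m + 1)

lemma contDiffOn_G (a b : ℂ) (m : ℕ) :
    ContDiffOn ℂ (⊤ : ℕ∞) (Gfun L A B c a b m) {x | Dfun L B c x ≠ 0} := by
  apply ContDiffOn.div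
  · exact ((contDiff_const.mul (contDiff_N L A)).add
      (contDiff_const.mul (contDiff_D L B c))).contDiffOn
  · exact ((contDiff_D L B c).pow (m+1)).contDiffOn
  · intro x hx; exact pow_ne_zero _ hx

lemma hasFDerivAt_G (a b : ℂ) (m : ℕ) (x : Fin L → ℂ) (hx : Dfun L B c x ≠ 0) :
    HasFDerivAt (Gfun L A B c a b m)
      ((Dfun L B c x ^ (m+1))⁻¹ • (a • SN L + b • SD L c) +
        ((a * Nfun L A x + b * Dfun L B c x) *
          (-(((m:ℂ)+1) * Dfun L B c x ^ m) / (Dfun L B c x ^ (m+1)) ^ 2)) • SD L c) x := by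
  have hp : HasFDerivAt (fun y => a * Nfun L A y + b * Dfun L B c y)
      (a • SN L + b • SD L c) x :=
    ((hasFDerivAt_N L A x).const_mul a).add ((hasFDerivAt_D L B c x).const_mul b)
  have hq1 : HasDerivAt (fun t : ℂ => (t ^ (m+1))⁻¹)
      (-(((m:ℂ)+1) * Dfun L B c x ^ m) / (Dfun L B c x ^ (m+1)) ^ 2) (Dfun L B c x) := by
    have h := (hasDerivAt_pow (m+1) (Dfun L B c x)).inv (pow_ne_zero _ hx)
    simp only [Nat.cast_add, Nat.cast_one, Nat.add_sub_cancel] at h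
    exact h
  have hq : HasFDerivAt (fun y => (Dfun L B c y ^ (m+1))⁻¹)
      ((-(((m:ℂ)+1) * Dfun L B c x ^ m) / (Dfun L B c x ^ (m+1)) ^ 2) • SD L c) x :=
    hq1.comp_hasFDerivAt x (hasFDerivAt_D L B c x)
  have hmul := hp.mul hq
  have heq : (Gfun L A B c a b m) =
      fun y => (a * Nfun L A y + b * Dfun L B c y) * (Dfun L B c y ^ (m+1))⁻¹ := by
    funext y; simp [Gfun, div_eq_mul_inv]
  rw [heq]
  refine hmul.congr_fderiv ?_
  ext v
  simp only [ContinuousLinearMap.add_apply, ContinuousLinearMap.smul_apply, smul_eq_mul]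
  ring

lemma fderiv_G_apply (a b : ℂ) (m : ℕ) (j : Fin L) (x : Fin L → ℂ)
    (hx : Dfun L B c x ≠ 0) :
    fderiv ℂ (Gfun L A B c a b m) x (Pi.single j 1) =
      Gfun L A B c (-((m:ℂ)+1) * c j * a) (a - (m:ℂ) * c j * b) (m+1) x := by
  rw [(hasFDerivAt_G L A B c a b m x hx).fderiv]
  simp only [ContinuousLinearMap.add_apply, ContinuousLinearMap.smul_apply, smul_eq_mul,
    SN_apply, SD_apply, Gfun]
  field_simp
  ring

end

/-! ### The key induction -/

lemma key_lemma (L : ℕ) (A B : ℂ) (c : Fin L → ℂ) (hc : ∀ l, ‖c l‖ = 1) :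
    ∀ (k m : ℕ) (a b : ℂ) (j : Fin k → Fin L) (y : Fin L → ℂ),
      Dfun L B c y ≠ 0 →
      ∃ a' b' : ℂ,
        iteratedFDerivWithin ℂ k (Gfun L A B c a b m) {x | Dfun L B c x ≠ 0} y
            (fun i => Pi.single (j i) 1) =
          Gfun L A B c a' b' (m + k) y ∧
        ‖a'‖ ≤ (AFc m k : ℝ) * ‖a‖ ∧
        ‖b'‖ ≤ (BBc m k : ℝ) * ‖b‖ + (BAc m k : ℝ) * ‖a‖ := by
  have hUo : IsOpen {x : Fin L → ℂ | Dfun L B c x ≠ 0} :=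
    isOpen_compl_iff.mpr (isClosed_eq (contDiff_D L B c).continuous continuous_const)
  have hUu : UniqueDiffOn ℂ {x : Fin L → ℂ | Dfun L B c x ≠ 0} := hUo.uniqueDiffOn
  intro k
  induction k with
  | zero =>
    intro m a b j y hy
    refine ⟨a, b, ?_, by simp [AFc], by simp [BBc, BAc]⟩
    simp [iteratedFDerivWithin_zero_apply]
  | succ k ih =>
    intro m a b j y hy
    have hyU : y ∈ {x : Fin L → ℂ | Dfun L B c x ≠ 0} := hy
    set U := {x : Fin L → ℂ | Dfun L B c x ≠ 0} with hU
    set a₁ : ℂ := -((m:ℂ)+1) * c (j (Fin.last k)) * a with ha₁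
    set b₁ : ℂ := a - (m:ℂ) * c (j (Fin.last k)) * b with hb₁
    obtain ⟨a', b', heq, haa, hbb⟩ := ih (m+1) a₁ b₁ (fun i => j i.castSucc) y hy
    refine ⟨a', b', ?_, ?_, ?_⟩
    · rw [iteratedFDerivWithin_succ_apply_right hUu hyU]
      have hcd : ContDiffOn ℂ (k : ℕ∞)
          (fun x => fderivWithin ℂ (Gfun L A B c a b m) U x) U :=
        (contDiffOn_G L A B c a b m).fderivWithin hUu (by exact_mod_cast le_top)
      have hcomp := (ContinuousLinearMap.apply ℂ ℂ (E := Fin L → ℂ)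
          (Pi.single (j (Fin.last k)) 1)).iteratedFDerivWithin_comp_left (hcd y hyU) hUu hyU
          (by norm_cast)
      have e1 : (iteratedFDerivWithin ℂ k (fun x => fderivWithin ℂ (Gfun L A B c a b m) U x)
            U y ((Fin.init (α := fun _ => Fin L → ℂ) fun i : Fin (k+1) => Pi.single (j i) (1:ℂ)) : Fin k → Fin L → ℂ)) (Pi.single (j (Fin.last k)) 1)
          = iteratedFDerivWithin ℂ k
              (fun x => fderivWithin ℂ (Gfun L A B c a b m) U x (Pi.single (j (Fin.last k)) 1))
              U y ((Fin.init (α := fun _ => Fin L → ℂ) fun i : Fin (k+1) => Pi.single (j i) (1:ℂ)) : Fin k → Fin L → ℂ) := by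
        exact (congrArg (fun M : ContinuousMultilinearMap ℂ (fun _ : Fin k => Fin L → ℂ) ℂ =>
          M ((Fin.init (α := fun _ => Fin L → ℂ) fun i : Fin (k+1) =>
            Pi.single (j i) (1:ℂ)) : Fin k → Fin L → ℂ)) hcomp).symm
      rw [e1]
      have e2 : Set.EqOn
          (fun x => fderivWithin ℂ (Gfun L A B c a b m) U x (Pi.single (j (Fin.last k)) 1))
          (Gfun L A B c a₁ b₁ (m+1)) U := by
        intro x hx
        have hx' : Dfun L B c x ≠ 0 := hx
        simp only
        rw [fderivWithin_of_isOpen hUo hx]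
        exact fderiv_G_apply L A B c a b m (j (Fin.last k)) x hx'
      rw [iteratedFDerivWithin_congr e2 hyU]
      have e3 : ((Fin.init (α := fun _ => Fin L → ℂ) fun i : Fin (k+1) => Pi.single (j i) (1:ℂ)) : Fin k → Fin L → ℂ)
          = fun i : Fin k => Pi.single (j i.castSucc) (1:ℂ) := rfl
      rw [e3, heq]
      congr 1
      omega
    · have hna : ‖a₁‖ = ((m:ℝ)+1) * ‖a‖ := by
        rw [ha₁]
        rw [norm_mul, norm_mul, norm_neg, hc]
        have h5 : ‖((m:ℂ)+1)‖ = (m:ℝ)+1 := by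
          rw [show ((m:ℂ)+1) = ((m+1 : ℕ) : ℂ) by push_cast; ring]
          rw [Complex.norm_natCast]; push_cast; try ring
        rw [h5]; try ring
      have hAF : (AFc m (k+1) : ℝ) = ((m:ℝ)+1) * (AFc (m+1) k : ℝ) := by
        simp only [AFc]; push_cast; ring
      calc ‖a'‖ ≤ (AFc (m+1) k : ℝ) * ‖a₁‖ := haa
        _ = (AFc m (k+1) : ℝ) * ‖a‖ := by rw [hna, hAF]; ring
    · have hna : ‖a₁‖ = ((m:ℝ)+1) * ‖a‖ := by
        rw [ha₁]
        rw [norm_mul, norm_mul, norm_neg, hc]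
        have h5 : ‖((m:ℂ)+1)‖ = (m:ℝ)+1 := by
          rw [show ((m:ℂ)+1) = ((m+1 : ℕ) : ℂ) by push_cast; ring]
          rw [Complex.norm_natCast]; push_cast; try ring
        rw [h5]; try ring
      have hnb : ‖b₁‖ ≤ ‖a‖ + (m:ℝ) * ‖b‖ := by
        rw [hb₁]
        refine (norm_sub_le _ _).trans ?_
        gcongr
        rw [norm_mul, norm_mul, hc]
        simp
      have hBB : (BBc m (k+1) : ℝ) = (m:ℝ) * (BBc (m+1) k : ℝ) := by
        simp only [BBc]; push_cast; ring
      have hBA : (BAc m (k+1) : ℝ)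
          = (BBc (m+1) k : ℝ) + ((m:ℝ)+1) * (BAc (m+1) k : ℝ) := by
        simp only [BAc]; push_cast; ring
      have h1 : (BBc (m+1) k : ℝ) * ‖b₁‖ ≤ (BBc (m+1) k : ℝ) * (‖a‖ + (m:ℝ) * ‖b‖) := by
        apply mul_le_mul_of_nonneg_left hnb (by positivity)
      calc ‖b'‖ ≤ (BBc (m+1) k : ℝ) * ‖b₁‖ + (BAc (m+1) k : ℝ) * ‖a₁‖ := hbb
        _ ≤ (BBc (m+1) k : ℝ) * (‖a‖ + (m:ℝ) * ‖b‖)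
            + (BAc (m+1) k : ℝ) * (((m:ℝ)+1) * ‖a‖) := by
            rw [hna]; exact add_le_add h1 le_rfl
        _ = (BBc m (k+1) : ℝ) * ‖b‖ + (BAc m (k+1) : ℝ) * ‖a‖ := by
            rw [hBB, hBA]; ring

theorem csi_ratio_taylor_term_bound
    (L : ℕ) (hL : 1 ≤ L) (A B : ℂ) (c : Fin L → ℂ)
    (hc : ∀ l, ‖c l‖ = 1)
    (k : ℕ) (hk : 1 ≤ k) (l : Fin k → Fin L)
    (z : Fin L → ℂ) (hD : Dfun L B c z ≠ 0)
    (R : ℝ) (hR : 0 ≤ R) (w : Fin k → ℂ) (hw : ∀ i, ‖w i‖ ≤ R) :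
    ‖(k.factorial : ℂ)⁻¹ *
        iteratedFDeriv ℂ k (ffun L A B c) z (fun i => Pi.single (l i) 1) *
        ∏ i, w i‖ ≤
      ((‖Nfun L A z‖ + ‖Dfun L B c z‖) / ‖Dfun L B c z‖) *
        (R / ‖Dfun L B c z‖) ^ k := by
  have hUo : IsOpen {x : Fin L → ℂ | Dfun L B c x ≠ 0} :=
    isOpen_compl_iff.mpr (isClosed_eq (contDiff_D L B c).continuous continuous_const)
  have hzU : z ∈ {x : Fin L → ℂ | Dfun L B c x ≠ 0} := hD
  obtain ⟨a', b', heq, ha, hb⟩ := key_lemma L A B c hc k 0 1 0 l z hD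
  have hffun : ffun L A B c = Gfun L A B c 1 0 0 := by
    funext x; simp [ffun, Gfun]
  have hval : iteratedFDeriv ℂ k (ffun L A B c) z (fun i => Pi.single (l i) 1)
      = (a' * Nfun L A z + b' * Dfun L B c z) / Dfun L B c z ^ (k+1) := by
    rw [← iteratedFDerivWithin_of_isOpen k hUo hzU, hffun, heq]
    simp [Gfun]
  have ha' : ‖a'‖ ≤ (k.factorial : ℝ) := by
    simpa [AFc_zero] using ha
  have hb' : ‖b'‖ ≤ (k.factorial : ℝ) := by
    simpa [BAc_zero k hk] using hb
  have hdn : (0:ℝ) < ‖Dfun L B c z‖ := norm_pos_iff.mpr hD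
  have hnum : ‖a' * Nfun L A z + b' * Dfun L B c z‖
      ≤ (k.factorial : ℝ) * (‖Nfun L A z‖ + ‖Dfun L B c z‖) := by
    calc ‖a' * Nfun L A z + b' * Dfun L B c z‖
        ≤ ‖a'‖ * ‖Nfun L A z‖ + ‖b'‖ * ‖Dfun L B c z‖ := by
          refine (norm_add_le _ _).trans ?_
          rw [norm_mul, norm_mul]
      _ ≤ (k.factorial : ℝ) * ‖Nfun L A z‖ + (k.factorial : ℝ) * ‖Dfun L B c z‖ := by
          gcongr
      _ = (k.factorial : ℝ) * (‖Nfun L A z‖ + ‖Dfun L B c z‖) := by ring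
  have hprod : ‖∏ i, w i‖ ≤ R ^ k := by
    rw [norm_prod]
    calc ∏ i, ‖w i‖ ≤ ∏ _i : Fin k, R :=
          Finset.prod_le_prod (fun i _ => norm_nonneg _) (fun i _ => hw i)
      _ = R ^ k := by simp
  have hfact : (0:ℝ) < (k.factorial : ℝ) := by positivity
  rw [hval, norm_mul, norm_mul, norm_div, norm_pow, norm_inv, Complex.norm_natCast]
  calc (k.factorial : ℝ)⁻¹ *
        (‖a' * Nfun L A z + b' * Dfun L B c z‖ / ‖Dfun L B c z‖ ^ (k+1)) * ‖∏ i, w i‖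
      ≤ (k.factorial : ℝ)⁻¹ *
        (((k.factorial : ℝ) * (‖Nfun L A z‖ + ‖Dfun L B c z‖)) / ‖Dfun L B c z‖ ^ (k+1))
          * R ^ k := by gcongr
    _ = ((‖Nfun L A z‖ + ‖Dfun L B c z‖) / ‖Dfun L B c z‖) * (R / ‖Dfun L B c z‖) ^ k := by
        rw [div_pow]
        field_simp
        ring
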